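/- Let V be a finite index set of variables with probability spaces (Ω_v, P_v) for v ∈ V, let Ω = ∏_{v ∈ V} Ω_v carry the product probability measure P, let ι be a finite index set, A : ι → Set Ω a family of measurable events, and vbl : ι → Finset V such that each A i is determined by the coordinates in vbl(i). Let G be a simple graph on ι such that any two distinct non-adjacent indices i, j satisfy vbl(i) ∩ vbl(j) = ∅. Suppose there are real numbers μ : ι → ℝ with 0 < μ i for all i, such that for every i ∈ ι, P(A i) ≤ μ i / (∑_{I ⊆ Γ̄(i), I independent in G} ∏_{j ∈ I} μ j), where Γ̄(i) denotes the closed neighborhood of i in G. Then there exists an assignment ω ∈ Ω of the variables such that ω ∉ A i for every i ∈ ι. -/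

import Mathlib

open MeasureTheory Finset


section Comb
variable {ι : Type*} [Fintype ι] [DecidableEq ι]
  (G : SimpleGraph ι) [DecidableRel G.Adj] (μ : ι → ℝ)

def indepF (T : Finset ι) : Finset (Finset ι) :=
  T.powerset.filter (fun I => ∀ a ∈ I, ∀ b ∈ I, ¬ G.Adj a b)

def Xi (T : Finset ι) : ℝ := ∑ I ∈ indepF G T, ∏ j ∈ I, μ j

def Nbar (i : ι) : Finset ι := insert i (G.neighborFinset i)

variable {G μ}

lemma mem_indepF {T I : Finset ι} :
    I ∈ indepF G T ↔ I ⊆ T ∧ ∀ a ∈ I, ∀ b ∈ I, ¬ G.Adj a b := by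
  simp [indepF]

set_option linter.unusedSectionVars false

variable (hμ : ∀ i, 0 < μ i)
include hμ

lemma prod_mu_pos (I : Finset ι) : 0 < ∏ j ∈ I, μ j :=
  Finset.prod_pos fun j _ => hμ j

lemma one_le_Xi (T : Finset ι) : 1 ≤ Xi G μ T := by
  have hempty : (∅ : Finset ι) ∈ indepF G T := by simp [mem_indepF]
  have := Finset.single_le_sum (f := fun I => ∏ j ∈ I, μ j)
    (fun I _ => (prod_mu_pos hμ I).le) hempty
  simpa [Xi] using this

lemma Xi_pos (T : Finset ι) : 0 < Xi G μ T := lt_of_lt_of_le one_pos (one_le_Xi hμ T)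

lemma Xi_mono {T T' : Finset ι} (h : T ⊆ T') : Xi G μ T ≤ Xi G μ T' := by
  apply Finset.sum_le_sum_of_subset_of_nonneg
  · intro I hI
    rw [mem_indepF] at hI ⊢
    exact ⟨hI.1.trans h, hI.2⟩
  · intro I _ _
    exact (prod_mu_pos hμ I).le

lemma Xi_union_le (T U : Finset ι) : Xi G μ (T ∪ U) ≤ Xi G μ T * Xi G μ U := by
  classical
  have hsplit : ∀ I : Finset ι, ∏ j ∈ I, μ j = (∏ j ∈ I ∩ T, μ j) * ∏ j ∈ I \ T, μ j := by
    intro I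
    rw [← Finset.prod_union (Finset.disjoint_sdiff_inter I T).symm,
      Finset.union_comm, Finset.sdiff_union_inter]
  have himg : Xi G μ (T ∪ U)
      = ∑ p ∈ (indepF G (T ∪ U)).image (fun I => (I ∩ T, I \ T)),
          (∏ j ∈ p.1, μ j) * ∏ j ∈ p.2, μ j := by
    rw [Finset.sum_image, Xi]
    · exact Finset.sum_congr rfl fun I _ => hsplit I
    · intro I _ J _ h
      rw [Prod.mk.injEq] at h
      have : I ∩ T ∪ I \ T = J ∩ T ∪ J \ T := by rw [h.1, h.2]
      rwa [Finset.union_comm, Finset.sdiff_union_inter, Finset.union_comm,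
        Finset.sdiff_union_inter] at this
  rw [himg, Xi, Xi, Finset.sum_mul_sum, ← Finset.sum_product']
  apply Finset.sum_le_sum_of_subset_of_nonneg
  · intro p hp
    rcases Finset.mem_image.1 hp with ⟨I, hI, rfl⟩
    rw [mem_indepF] at hI
    rw [Finset.mem_product]
    constructor
    · rw [mem_indepF]
      exact ⟨Finset.inter_subset_right, fun a ha b hb =>
        hI.2 a (Finset.mem_inter.1 ha).1 b (Finset.mem_inter.1 hb).1⟩
    · rw [mem_indepF]
      refine ⟨fun x hx => ?_, fun a ha b hb =>
        hI.2 a (Finset.mem_sdiff.1 ha).1 b (Finset.mem_sdiff.1 hb).1⟩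
      rcases Finset.mem_sdiff.1 hx with ⟨hx1, hx2⟩
      rcases Finset.mem_union.1 (hI.1 hx1) with h | h
      · exact absurd h hx2
      · exact h
  · intro p _ _
    exact mul_nonneg (prod_mu_pos hμ p.1).le (prod_mu_pos hμ p.2).le

lemma Xi_insert_ge {d : ι} {T : Finset ι} (hd : d ∉ T) :
    Xi G μ T + μ d * Xi G μ (T \ Nbar G d) ≤ Xi G μ (insert d T) := by
  classical
  set s2 : Finset (Finset ι) := (indepF G (T \ Nbar G d)).image (insert d) with hs2
  have hmem2 : ∀ J ∈ indepF G (T \ Nbar G d), insert d J ∈ indepF G (insert d T) := by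
    intro J hJ
    rw [mem_indepF] at hJ ⊢
    constructor
    · exact Finset.insert_subset_insert d (hJ.1.trans (Finset.sdiff_subset))
    · have hnadj : ∀ c ∈ J, ¬ G.Adj d c := by
        intro c hc
        have := (Finset.mem_sdiff.1 (hJ.1 hc)).2
        simp only [Nbar, Finset.mem_insert, SimpleGraph.mem_neighborFinset] at this
        push_neg at this
        exact this.2
      intro a ha b hb
      rcases Finset.mem_insert.1 ha with ha' | ha'
      · rcases Finset.mem_insert.1 hb with hb' | hb'
        · rw [ha', hb']; exact G.irrefl
        · rw [ha']; exact hnadj b hb'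
      · rcases Finset.mem_insert.1 hb with hb' | hb'
        · rw [hb']; intro hadj; exact hnadj a ha' hadj.symm
        · exact hJ.2 a ha' b hb'
  have hdJ : ∀ J ∈ indepF G (T \ Nbar G d), d ∉ J := by
    intro J hJ hdJ
    have := (Finset.mem_sdiff.1 ((mem_indepF.1 hJ).1 hdJ)).2
    simp [Nbar] at this
  have hsum2 : ∑ I ∈ s2, ∏ j ∈ I, μ j = μ d * Xi G μ (T \ Nbar G d) := by
    rw [hs2, Finset.sum_image, Xi, Finset.mul_sum]
    · exact Finset.sum_congr rfl fun J hJ => Finset.prod_insert (hdJ J hJ)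
    · intro J hJ K hK h
      have : (insert d J).erase d = (insert d K).erase d := by rw [h]
      rwa [Finset.erase_insert (hdJ J hJ), Finset.erase_insert (hdJ K hK)] at this
  have hdisj : Disjoint (indepF G T) s2 := by
    rw [Finset.disjoint_left]
    intro I hI hI2
    rcases Finset.mem_image.1 hI2 with ⟨J, hJ, rfl⟩
    exact hd ((mem_indepF.1 hI).1 (Finset.mem_insert_self d J))
  have hsub : indepF G T ∪ s2 ⊆ indepF G (insert d T) := by
    intro I hI
    rcases Finset.mem_union.1 hI with h | h
    · rw [mem_indepF] at h ⊢
      exact ⟨h.1.trans (Finset.subset_insert d T), h.2⟩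
    · rcases Finset.mem_image.1 h with ⟨J, hJ, rfl⟩
      exact hmem2 J hJ
  calc Xi G μ T + μ d * Xi G μ (T \ Nbar G d)
      = ∑ I ∈ indepF G T ∪ s2, ∏ j ∈ I, μ j := by
        rw [Finset.sum_union hdisj, hsum2, Xi]
    _ ≤ Xi G μ (insert d T) :=
        Finset.sum_le_sum_of_subset_of_nonneg hsub fun I _ _ => (prod_mu_pos hμ I).le

end Comb


section Prob
variable {V : Type*} [Fintype V] [DecidableEq V]
  {Ωv : V → Type*} [∀ v, MeasurableSpace (Ωv v)]
  (Pv : ∀ v, Measure (Ωv v)) [∀ v, IsProbabilityMeasure (Pv v)]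

lemma det_indep
    {E F : Set (∀ v, Ωv v)} (hE : MeasurableSet E) (hF : MeasurableSet F)
    (s : Finset V)
    (hdE : ∀ ω ω' : (∀ v, Ωv v), (∀ v ∈ s, ω v = ω' v) → (ω ∈ E ↔ ω' ∈ E))
    (hdF : ∀ ω ω' : (∀ v, Ωv v), (∀ v ∉ s, ω v = ω' v) → (ω ∈ F ↔ ω' ∈ F)) :
    Measure.pi Pv (E ∩ F) = Measure.pi Pv E * Measure.pi Pv F := by
  classical
  have hne : ∀ v, Nonempty (Ωv v) := by
    intro v
    by_contra h
    rw [not_nonempty_iff] at h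
    have h1 : (Pv v) Set.univ = 1 := measure_univ
    rw [Set.univ_eq_empty_iff.2 h, measure_empty] at h1
    exact zero_ne_one h1
  have ω₀ : ∀ v, Ωv v := fun v => Classical.arbitrary _
  set p : V → Prop := fun v => v ∈ s with hp
  set e := MeasurableEquiv.piEquivPiSubtypeProd Ωv p with he
  have hmp := measurePreserving_piEquivPiSubtypeProd Pv p
  set g₁ : (∀ v : Subtype p, Ωv v) → (∀ v, Ωv v) :=
    fun y v => if h : p v then y ⟨v, h⟩ else ω₀ v with hg₁
  set g₂ : (∀ v : {v // ¬ p v}, Ωv v) → (∀ v, Ωv v) :=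
    fun y v => if h : p v then ω₀ v else y ⟨v, h⟩ with hg₂
  have hg₁m : Measurable g₁ := by
    apply measurable_pi_lambda
    intro v
    by_cases h : p v
    · simp only [hg₁, dif_pos h]
      exact measurable_pi_apply _
    · simp only [hg₁, dif_neg h]
      exact measurable_const
  have hg₂m : Measurable g₂ := by
    apply measurable_pi_lambda
    intro v
    by_cases h : p v
    · simp only [hg₂, dif_pos h]
      exact measurable_const
    · simp only [hg₂, dif_neg h]
      exact measurable_pi_apply _
  set T₁ : Set (∀ v : Subtype p, Ωv v) := g₁ ⁻¹' E with hT₁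
  set T₂ : Set (∀ v : {v // ¬ p v}, Ωv v) := g₂ ⁻¹' F with hT₂
  have hT₁m : MeasurableSet T₁ := hg₁m hE
  have hT₂m : MeasurableSet T₂ := hg₂m hF
  have hEeq : E = e ⁻¹' (T₁ ×ˢ Set.univ) := by
    ext ω
    simp only [Set.mem_preimage, Set.mem_prod, Set.mem_univ, and_true, he,
      MeasurableEquiv.piEquivPiSubtypeProd, Equiv.piEquivPiSubtypeProd,
      MeasurableEquiv.coe_mk, Equiv.coe_fn_mk, hT₁]
    exact hdE ω (g₁ fun v : Subtype p => ω v)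
      (fun v hv => by simp [hg₁, hp, hv])
  have hFeq : F = e ⁻¹' (Set.univ ×ˢ T₂) := by
    ext ω
    simp only [Set.mem_preimage, Set.mem_prod, Set.mem_univ, true_and, he,
      MeasurableEquiv.piEquivPiSubtypeProd, Equiv.piEquivPiSubtypeProd,
      MeasurableEquiv.coe_mk, Equiv.coe_fn_mk, hT₂]
    exact hdF ω (g₂ fun v : {v // ¬ p v} => ω v)
      (fun v hv => by simp [hg₂, hp, hv])
  have hinter : E ∩ F = e ⁻¹' (T₁ ×ˢ T₂) := by
    rw [hEeq, hFeq, ← Set.preimage_inter, Set.prod_inter_prod, Set.univ_inter,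
      Set.inter_univ]
  rw [hinter, hEeq, hFeq, hmp.measure_preimage (hT₁m.prod hT₂m).nullMeasurableSet,
    hmp.measure_preimage (hT₁m.prod MeasurableSet.univ).nullMeasurableSet,
    hmp.measure_preimage (MeasurableSet.univ.prod hT₂m).nullMeasurableSet,
    Measure.prod_prod, Measure.prod_prod, Measure.prod_prod, measure_univ, measure_univ]
  ring

end Prob

section Main
set_option linter.unusedSectionVars false
set_option maxHeartbeats 1000000
variable {V : Type*} [Fintype V] [DecidableEq V]
  {Ωv : V → Type*} [∀ v, MeasurableSpace (Ωv v)]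
  (Pv : ∀ v, Measure (Ωv v)) [∀ v, IsProbabilityMeasure (Pv v)]
  {ι : Type*} [Fintype ι] [DecidableEq ι]
  (A : ι → Set (∀ v, Ωv v))

def BS (T : Finset ι) : Set (∀ v, Ωv v) := ⋂ j ∈ T, (A j)ᶜ
noncomputable def qq (T : Finset ι) : ℝ := (Measure.pi Pv (BS A T)).toReal
noncomputable def pA (i : ι) (T : Finset ι) : ℝ := (Measure.pi Pv (A i ∩ BS A T)).toReal

variable {A}

lemma BS_meas (hA : ∀ i, MeasurableSet (A i)) (T : Finset ι) : MeasurableSet (BS A T) :=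
  MeasurableSet.biInter (T : Set ι).to_countable fun j _ => (hA j).compl

lemma BS_anti {T T' : Finset ι} (h : T ⊆ T') : BS A T' ⊆ BS A T := by
  intro ω hω
  rw [BS, Set.mem_iInter₂] at hω ⊢
  exact fun j hj => hω j (h hj)

lemma qq_nonneg (T : Finset ι) : 0 ≤ qq Pv A T := ENNReal.toReal_nonneg

lemma qq_empty : qq Pv A (∅ : Finset ι) = 1 := by
  rw [qq, BS]
  simp

lemma qq_insert_eq (hA : ∀ i, MeasurableSet (A i)) (d : ι) (T : Finset ι) :
    qq Pv A T = pA Pv A d T + qq Pv A (insert d T) := by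
  have hBS : BS A (insert d T) = BS A T \ A d := by
    rw [BS, BS, Finset.set_biInter_insert, Set.diff_eq, Set.inter_comm]
  have h := measure_inter_add_diff (μ := Measure.pi Pv) (BS A T) (hA d)
  rw [qq, qq, pA, hBS, Set.inter_comm]
  rw [← h, ENNReal.toReal_add (measure_ne_top _ _) (measure_ne_top _ _)]

lemma pA_mono (i : ι) {T T' : Finset ι} (h : T ⊆ T') : pA Pv A i T' ≤ pA Pv A i T := by
  rw [pA, pA]
  apply ENNReal.toReal_mono (measure_ne_top _ _)
  exact measure_mono (Set.inter_subset_inter_right _ (BS_anti h))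

variable (G : SimpleGraph ι) [DecidableRel G.Adj] (μ : ι → ℝ)
  (vbl : ι → Finset V)
variable {G μ}
variable (hA : ∀ i, MeasurableSet (A i))
  (hdet : ∀ i, ∀ ω ω' : (∀ v, Ωv v),
      (∀ v ∈ vbl i, ω v = ω' v) → (ω ∈ A i ↔ ω' ∈ A i))
  (hvbl : ∀ i j, i ≠ j → ¬ G.Adj i j → vbl i ∩ vbl j = ∅)
  (hμ : ∀ i, 0 < μ i)
  (hP : ∀ i, Measure.pi Pv (A i) ≤ ENNReal.ofReal (μ i / Xi G μ (Nbar G i)))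

include hA hdet hvbl hμ hP in
lemma key : ∀ S : Finset ι, ∀ i ∉ S,
    pA Pv A i S ≤ μ i / Xi G μ (Nbar G i \ S) * qq Pv A S := by
  intro S
  induction S using Finset.strongInduction with
  | _ S ih =>
  intro i hi
  set N : Finset ι := G.neighborFinset i with hN
  set S' : Finset ι := S \ N with hS'
  have hS'S : S' ⊆ S := Finset.sdiff_subset
  -- independence of A i and BS A S'
  have hindep : Measure.pi Pv (A i ∩ BS A S')
      = Measure.pi Pv (A i) * Measure.pi Pv (BS A S') := by
    apply det_indep Pv (hA i) (BS_meas hA S') (vbl i) (hdet i)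
    intro ω ω' hagree
    have hAj : ∀ j ∈ S', (ω ∈ A j ↔ ω' ∈ A j) := by
      intro j hj
      have hjS : j ∈ S := hS'S hj
      have hji : j ≠ i := fun h => hi (h ▸ hjS)
      have hnadj : ¬ G.Adj i j := by
        intro hadj
        exact (Finset.mem_sdiff.1 hj).2 (by rw [hN]; exact (SimpleGraph.mem_neighborFinset G i j).2 hadj)
      have hdisj := hvbl i j (Ne.symm hji) hnadj
      apply hdet j
      intro v hv
      apply hagree
      intro hvi
      have : v ∈ vbl i ∩ vbl j := Finset.mem_inter.2 ⟨hvi, hv⟩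
      rw [hdisj] at this
      exact absurd this (Finset.notMem_empty v)
    constructor <;> intro h <;> rw [BS, Set.mem_iInter₂] at h ⊢ <;>
      intro j hj <;> have := h j hj <;> simp only [Set.mem_compl_iff] at this ⊢
    · exact fun hmem => this ((hAj j hj).2 hmem)
    · exact fun hmem => this ((hAj j hj).1 hmem)
  have hPAi : (Measure.pi Pv (A i)).toReal ≤ μ i / Xi G μ (Nbar G i) := by
    have h := ENNReal.toReal_mono ENNReal.ofReal_ne_top (hP i)
    rwa [ENNReal.toReal_ofReal (div_nonneg (hμ i).le (Xi_pos hμ _).le)] at h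
  -- inner induction
  have inner : ∀ D' ⊆ S ∩ N,
      qq Pv A S' * Xi G μ (Nbar G i \ (S' ∪ D')) ≤ qq Pv A (S' ∪ D') * Xi G μ (Nbar G i) := by
    intro D'
    induction D' using Finset.induction_on with
    | empty =>
      intro _
      rw [Finset.union_empty]
      exact mul_le_mul_of_nonneg_left (Xi_mono hμ Finset.sdiff_subset) (qq_nonneg Pv S')
    | @insert d D' hd ihD =>
      intro hsub
      have hdSN : d ∈ S ∩ N := hsub (Finset.mem_insert_self d D')
      have hμd : (0:ℝ) < μ d := hμ d
      have hD'sub : D' ⊆ S ∩ N := fun x hx => hsub (Finset.mem_insert_of_mem hx)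
      set T : Finset ι := S' ∪ D' with hT
      have hdT : d ∉ T := by
        rw [hT, Finset.mem_union]
        rintro (h | h)
        · exact (Finset.mem_sdiff.1 h).2 (Finset.mem_inter.1 hdSN).2
        · exact hd h
      have hTS : T ⊆ S := Finset.union_subset hS'S
        ((hD'sub).trans Finset.inter_subset_left)
      have hTlt : T ⊂ S := (Finset.ssubset_iff_of_subset hTS).2
        ⟨d, (Finset.mem_inter.1 hdSN).1, hdT⟩
      have hkeyd := ih T hTlt d hdT
      have hq1 := qq_insert_eq Pv hA d T
      have hUnionIns : S' ∪ insert d D' = insert d T := by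
        rw [hT, Finset.union_insert]
      rw [hUnionIns]
      set W : Finset ι := Nbar G i \ insert d T with hWdef
      have hdNbari : d ∈ Nbar G i := by
        rw [Nbar, Finset.mem_insert]
        right
        exact (Finset.mem_inter.1 hdSN).2
      have hdW : d ∉ W := by
        rw [hWdef, Finset.mem_sdiff]
        rintro ⟨-, h⟩
        exact h (Finset.mem_insert_self d T)
      have hW : insert d W = Nbar G i \ T := by
        rw [hWdef, Finset.sdiff_insert, Finset.insert_erase
          (Finset.mem_sdiff.2 ⟨hdNbari, hdT⟩)]
      set Ed : ℝ := Xi G μ (G.neighborFinset d \ T) with hEd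
      set Φ : ℝ := Xi G μ (Nbar G d \ T) with hΦ
      have hEd1 : 1 ≤ Ed := one_le_Xi hμ _
      have hΦEd : Ed + μ d ≤ Φ := by
        have hins : Nbar G d \ T = insert d (G.neighborFinset d \ T) := by
          rw [Nbar, Finset.insert_sdiff_of_notMem _ hdT]
        have hd2 : d ∉ G.neighborFinset d \ T := by
          rw [Finset.mem_sdiff, SimpleGraph.mem_neighborFinset]
          rintro ⟨h, -⟩
          exact G.irrefl h
        have := Xi_insert_ge (G := G) hμ (T := G.neighborFinset d \ T) hd2
        have h1 : (1 : ℝ) ≤ Xi G μ ((G.neighborFinset d \ T) \ Nbar G d) := one_le_Xi hμ _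
        rw [hΦ, hins]
        nlinarith [(hμ d).le, this, h1]
      have hΦpos : 0 < Φ := by nlinarith [(hμ d)]
      have hf4 : Xi G μ W + μ d * Xi G μ (W \ Nbar G d) ≤ Xi G μ (insert d W) :=
        Xi_insert_ge hμ hdW
      have hf5 : Xi G μ W ≤ Xi G μ (W \ Nbar G d) * Ed := by
        have hsub5 : W ⊆ (W \ Nbar G d) ∪ (G.neighborFinset d \ T) := by
          intro x hx
          rw [Finset.mem_union]
          by_cases hxd : x ∈ Nbar G d
          · right
            rw [Finset.mem_sdiff]
            have hxW := Finset.mem_sdiff.1 hx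
            have hxd' : x ≠ d := by
              intro h
              exact hdW (h ▸ hx)
            have : x ∈ G.neighborFinset d := by
              rcases Finset.mem_insert.1 hxd with h | h
              · exact absurd h hxd'
              · exact h
            exact ⟨this, fun hxT => hxW.2 (Finset.mem_insert_of_mem hxT)⟩
          · left
            exact Finset.mem_sdiff.2 ⟨hx, hxd⟩
        calc Xi G μ W ≤ Xi G μ ((W \ Nbar G d) ∪ (G.neighborFinset d \ T)) :=
              Xi_mono hμ hsub5
          _ ≤ Xi G μ (W \ Nbar G d) * Ed := Xi_union_le hμ _ _
      -- numeric assembly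
      have hinner := ihD hD'sub
      rw [← hW] at hinner
      have hXiNnn : (0:ℝ) ≤ Xi G μ (Nbar G i) := (Xi_pos hμ _).le
      have hqS' : (0:ℝ) ≤ qq Pv A S' := qq_nonneg Pv S'
      have hqT : (0:ℝ) ≤ qq Pv A T := qq_nonneg Pv T
      have hfac2 : Ed / (Ed + μ d) ≤ 1 - μ d / Φ := by
        have h1 : μ d / Φ ≤ μ d / (Ed + μ d) :=
          div_le_div_of_nonneg_left (hμ d).le (by linarith) hΦEd
        have h2 : Ed / (Ed + μ d) + μ d / (Ed + μ d) = 1 := by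
          rw [← add_div, div_self (by linarith : Ed + μ d ≠ 0)]
        linarith
      have hfac : (0:ℝ) ≤ 1 - μ d / Φ := by
        have h0 : (0:ℝ) ≤ Ed / (Ed + μ d) := div_nonneg (by linarith) (by linarith)
        linarith
      have step1 : (Ed + μ d) * Xi G μ W ≤ Ed * Xi G μ (insert d W) := by
        nlinarith [mul_le_mul_of_nonneg_left hf4 (by linarith : (0:ℝ) ≤ Ed),
          mul_le_mul_of_nonneg_left hf5 (hμ d).le]
      have hXiW : (0:ℝ) ≤ Xi G μ W := (Xi_pos hμ _).le
      have hXiIns : (0:ℝ) ≤ Xi G μ (insert d W) := (Xi_pos hμ _).le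
      have step2 : Xi G μ W ≤ (1 - μ d / Φ) * Xi G μ (insert d W) := by
        have hdd : Xi G μ W ≤ Ed / (Ed + μ d) * Xi G μ (insert d W) := by
          rw [div_mul_eq_mul_div, le_div_iff₀ (by linarith : (0:ℝ) < Ed + μ d)]
          nlinarith [step1]
        have := mul_le_mul_of_nonneg_right hfac2 hXiIns
        linarith
      have step5 : (1 - μ d / Φ) * qq Pv A T ≤ qq Pv A (insert d T) := by
        nlinarith [hq1, hkeyd]
      calc qq Pv A S' * Xi G μ W
          ≤ qq Pv A S' * ((1 - μ d / Φ) * Xi G μ (insert d W)) :=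
            mul_le_mul_of_nonneg_left step2 hqS'
        _ = (1 - μ d / Φ) * (qq Pv A S' * Xi G μ (insert d W)) := by ring
        _ ≤ (1 - μ d / Φ) * (qq Pv A T * Xi G μ (Nbar G i)) :=
            mul_le_mul_of_nonneg_left hinner hfac
        _ = ((1 - μ d / Φ) * qq Pv A T) * Xi G μ (Nbar G i) := by ring
        _ ≤ qq Pv A (insert d T) * Xi G μ (Nbar G i) :=
            mul_le_mul_of_nonneg_right step5 hXiNnn
  have hC := inner (S ∩ N) (le_refl _)
  rw [hS', Finset.sdiff_union_inter] at hC
  rw [← hS'] at hC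
  have h1 : pA Pv A i S ≤ pA Pv A i S' := pA_mono Pv i hS'S
  have h2 : pA Pv A i S' = (Measure.pi Pv (A i)).toReal * qq Pv A S' := by
    rw [pA, qq, hindep, ENNReal.toReal_mul]
  have hXiNpos : (0:ℝ) < Xi G μ (Nbar G i) := Xi_pos hμ _
  have hXiNSpos : (0:ℝ) < Xi G μ (Nbar G i \ S) := Xi_pos hμ _
  have hqS' : (0:ℝ) ≤ qq Pv A S' := qq_nonneg Pv S'
  have hqS : (0:ℝ) ≤ qq Pv A S := qq_nonneg Pv S
  have h3 : pA Pv A i S ≤ μ i / Xi G μ (Nbar G i) * qq Pv A S' := by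
    rw [h2] at h1
    calc pA Pv A i S ≤ (Measure.pi Pv (A i)).toReal * qq Pv A S' := h1
      _ ≤ μ i / Xi G μ (Nbar G i) * qq Pv A S' :=
          mul_le_mul_of_nonneg_right hPAi hqS'
  have h4 : μ i / Xi G μ (Nbar G i) * qq Pv A S' ≤ μ i / Xi G μ (Nbar G i \ S) * qq Pv A S := by
    rw [div_mul_eq_mul_div, div_mul_eq_mul_div, div_le_div_iff₀ hXiNpos hXiNSpos]
    nlinarith [mul_le_mul_of_nonneg_left hC (hμ i).le]
  linarith

include hA hdet hvbl hμ hP in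
lemma qq_pos : ∀ S : Finset ι, 0 < qq Pv A S := by
  intro S
  induction S using Finset.induction_on with
  | empty =>
    rw [qq_empty]
    norm_num
  | @insert i S hi ihS =>
    have hμi : (0:ℝ) < μ i := hμ i
    have hq1 := qq_insert_eq Pv hA i S
    have hk := key Pv vbl hA hdet hvbl hμ hP S i hi
    have hXi : 1 + μ i ≤ Xi G μ (Nbar G i \ S) := by
      have hins : Nbar G i \ S = insert i (G.neighborFinset i \ S) := by
        rw [Nbar, Finset.insert_sdiff_of_notMem _ hi]
      have hd2 : i ∉ G.neighborFinset i \ S := by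
        rw [Finset.mem_sdiff, SimpleGraph.mem_neighborFinset]
        rintro ⟨h, -⟩
        exact G.irrefl h
      have h2 := Xi_insert_ge (G := G) hμ hd2
      have h1 : (1:ℝ) ≤ Xi G μ ((G.neighborFinset i \ S) \ Nbar G i) := one_le_Xi hμ _
      have h0 : (1:ℝ) ≤ Xi G μ (G.neighborFinset i \ S) := one_le_Xi hμ _
      rw [hins]
      nlinarith [(hμ i).le]
    have hfrac : μ i / Xi G μ (Nbar G i \ S) < 1 := by
      rw [div_lt_one (Xi_pos hμ _)]
      linarith
    have hfpos : (0:ℝ) < 1 - μ i / Xi G μ (Nbar G i \ S) := by linarith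
    nlinarith [mul_pos hfpos ihS, hq1, hk]

include hA hdet hvbl hμ hP in
theorem final : ∃ ω : (∀ v, Ωv v), ∀ i, ω ∉ A i := by
  have hpos := qq_pos Pv vbl hA hdet hvbl hμ hP (Finset.univ : Finset ι)
  have hne : Measure.pi Pv (BS A (Finset.univ : Finset ι)) ≠ 0 := by
    intro h
    rw [qq, h] at hpos
    simp at hpos
  have hnonempty : (BS A (Finset.univ : Finset ι)).Nonempty := by
    rw [Set.nonempty_iff_ne_empty]
    intro h
    rw [h] at hne
    exact hne measure_empty
  obtain ⟨ω, hω⟩ := hnonempty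
  refine ⟨ω, fun i => ?_⟩
  rw [BS, Set.mem_iInter₂] at hω
  exact hω i (Finset.mem_univ i)
end Main

/-- **Cluster-expansion improvement of the Moser–Tardos Local Lemma (existence
part).** Events determined by finite sets of independent random variables, with
a variable-dependency graph and the cluster-expansion condition
`P(A i) ≤ μ i / ∑_{I ⊆ Γ̄(i), I independent} ∏_{j ∈ I} μ j`, admit an
assignment of the variables violating no event. -/
theorem cluster_expansion_moser_tardos
    {V : Type*} [Fintype V] [DecidableEq V]
    {Ωv : V → Type*} [∀ v, MeasurableSpace (Ωv v)]
    (Pv : ∀ v, Measure (Ωv v)) [∀ v, IsProbabilityMeasure (Pv v)]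
    {ι : Type*} [Fintype ι] [DecidableEq ι]
    (A : ι → Set (∀ v, Ωv v)) (hA : ∀ i, MeasurableSet (A i))
    (vbl : ι → Finset V)
    (hdet : ∀ i, ∀ ω ω' : (∀ v, Ωv v),
      (∀ v ∈ vbl i, ω v = ω' v) → (ω ∈ A i ↔ ω' ∈ A i))
    (G : SimpleGraph ι) [DecidableRel G.Adj]
    (hvbl : ∀ i j, i ≠ j → ¬ G.Adj i j → vbl i ∩ vbl j = ∅)
    (μ : ι → ℝ) (hμ : ∀ i, 0 < μ i)
    (hP : ∀ i, Measure.pi Pv (A i) ≤ ENNReal.ofReal (μ i /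
      ∑ I ∈ (insert i (G.neighborFinset i)).powerset.filter
        (fun I => ∀ a ∈ I, ∀ b ∈ I, ¬ G.Adj a b), ∏ j ∈ I, μ j)) :
    ∃ ω : (∀ v, Ωv v), ∀ i, ω ∉ A i := by
  exact final Pv vbl hA hdet hvbl hμ (fun i => hP i)
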